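/- For any program P, if P:[] ⇓ λx.e:ρ in the environment-based semantics, then λx.e is a subexpression of P. -/
import Mathlib


/- Untyped λ-expressions. -/
inductive Exp : Type
  | var : String → Exp
  | app : Exp → Exp → Exp
  | lam : String → Exp → Exp
deriving DecidableEq

namespace Exp

/-- Free variables. -/
def fv : Exp → Finset String
  | var x => {x}
  | app e1 e2 => fv e1 ∪ fv e2
  | lam x e => fv e \ {x}

/-- The set of subexpressions of a λ-expression. -/
def subexp : Exp → Set Exp
  | var x => {var x}
  | app e1 e2 => insert (app e1 e2) (subexp e1 ∪ subexp e2)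
  | lam x e => insert (lam x e) (subexp e)

end Exp

/- Values (closures), environments and states of the environment-based
semantics.  An environment is a (partial) map from variable names to values;
a state `e:ρ` pairs an expression with an environment. -/
inductive Val : Type
  | clos : String → Exp → (String → Option Val) → Val

abbrev Env := String → Option Val
abbrev State := Exp × Env

/-- A value `λx.e:ρ` viewed as a state. -/
def Val.toState : Val → State
  | .clos x e ρ => (Exp.lam x e, ρ)

/-- The λ-expression component of a value. -/
def Val.toExp : Val → Exp
  | .clos x e _ => Exp.lam x e

def Env.update (ρ : Env) (x : String) (v : Val) : Env :=
  fun y => if y = x then some v else ρ y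

def Env.empty : Env := fun _ => none
/- Environment-based evaluation `s ⇓ v` and the call relations
`→r` (Operator), `→d` (Operand), `→c` (Call); (Apply) evaluates an
application via its `→c` call. -/
mutual
  inductive EvalE : State → Val → Prop
    | value (x : String) (e : Exp) (ρ : Env) :
        EvalE (Exp.lam x e, ρ) (Val.clos x e ρ)
    | var {ρ : Env} {x : String} {v : Val} :
        ρ x = some v → EvalE (Exp.var x, ρ) v
    | apply {s s' : State} {v : Val} :
        CallC s s' → EvalE s' v → EvalE s v
  inductive CallC : State → State → Prop
    | call {e1 e2 : Exp} {ρ ρ0 : Env} {x : String} {e0 : Exp} {v2 : Val} :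
        EvalE (e1, ρ) (Val.clos x e0 ρ0) → EvalE (e2, ρ) v2 →
        CallC (Exp.app e1 e2, ρ) (e0, Env.update ρ0 x v2)
end

inductive CallR : State → State → Prop
  | oper (e1 e2 : Exp) (ρ : Env) : CallR (Exp.app e1 e2, ρ) (e1, ρ)

inductive CallD : State → State → Prop
  | opnd {e1 : Exp} {ρ : Env} {v1 : Val} (e2 : Exp) :
      EvalE (e1, ρ) v1 → CallD (Exp.app e1 e2, ρ) (e2, ρ)

/-- The call relation `→` on states is `→r ∪ →d ∪ →c`. -/
def Call (s s' : State) : Prop := CallR s s' ∨ CallD s s' ∨ CallC s s'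

lemma Exp.mem_subexp_self (e : Exp) : e ∈ e.subexp := by
  cases e <;> simp [Exp.subexp]

lemma Exp.subexp_trans {a b c : Exp} (hab : a ∈ b.subexp) (hbc : b ∈ c.subexp) :
    a ∈ c.subexp := by
  induction c with
  | var x =>
      simp [Exp.subexp] at hbc; subst hbc; simpa [Exp.subexp] using hab
  | app c1 c2 ih1 ih2 =>
      simp [Exp.subexp] at hbc ⊢
      rcases hbc with h | h | h
      · subst h; simpa [Exp.subexp] using hab
      · exact Or.inr (Or.inl (ih1 h))
      · exact Or.inr (Or.inr (ih2 h))
  | lam y c ih =>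
      simp [Exp.subexp] at hbc ⊢
      rcases hbc with h | h
      · subst h; simpa [Exp.subexp] using hab
      · exact Or.inr (ih h)

inductive GoodV (P : Exp) : Val → Prop
  | mk {x e ρ} : Exp.lam x e ∈ P.subexp →
      (∀ y v, ρ y = some v → GoodV P v) → GoodV P (.clos x e ρ)

def GoodS (P : Exp) (s : State) : Prop :=
  s.1 ∈ P.subexp ∧ ∀ y w, s.2 y = some w → GoodV P w

lemma eval_good (P : Exp) :
    ∀ {s v}, EvalE s v → GoodS P s → GoodV P v := by
  have key : ∀ s v, EvalE s v → (GoodS P s → GoodV P v) :=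
    fun s v h =>
    EvalE.rec (motive_1 := fun s v _ => GoodS P s → GoodV P v)
      (motive_2 := fun s s' _ => GoodS P s → GoodS P s')
      (fun x e ρ hs => GoodV.mk hs.1 hs.2)
      (fun hx hs => hs.2 _ _ hx)
      (fun _ _ ihc ihe hs => ihe (ihc hs))
      (fun (h1 : EvalE _ (Val.clos _ _ _)) _h2 ih1 ih2 hs => by
        have hsub : GoodS P (_, _) := hs
        have hg1 := ih1 ⟨Exp.subexp_trans (by simp [Exp.subexp]; exact Or.inr (Or.inl (Exp.mem_subexp_self _))) hs.1, hs.2⟩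
        have hg2 := ih2 ⟨Exp.subexp_trans (by simp [Exp.subexp]; exact Or.inr (Or.inr (Exp.mem_subexp_self _))) hs.1, hs.2⟩
        cases hg1 with
        | mk hlam hρ0 =>
          refine ⟨Exp.subexp_trans (by simp [Exp.subexp]; exact Or.inr (Exp.mem_subexp_self _)) hlam, ?_⟩
          intro y w hy
          simp only [Env.update] at hy
          split at hy
          · cases hy; exact hg2
          · exact hρ0 _ _ hy)
      h
  intro s v h hs
  exact key s v h hs

/-- If `P:[] ⇓ λx.e:ρ` then `λx.e` is a subexpression of `P`. -/
theorem eval_value_is_subexpression (P : Exp) (hP : P.fv = ∅)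
    (x : String) (e : Exp) (ρ : Env)
    (h : EvalE (P, Env.empty) (Val.clos x e ρ)) :
    Exp.lam x e ∈ Exp.subexp P := by
  have := eval_good P h ⟨Exp.mem_subexp_self P, fun y w hy => by simp [Env.empty] at hy⟩
  cases this with
  | mk h1 _ => exact h1
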